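/- There exists C' ≥ 1 such that for all x, y ∈ H the following holds: let α := {x·u : u a prefix of the reduced word of x⁻¹y} (the vertex set of the geodesic from x to y in the Cayley graph of H with respect to {a,b}), and let β be (the set of points of) any d_Y-geodesic from x to y; then every point of α is within d_Y-distance C' of some point of β, and every point of β is within d_Y-distance C' of some point of α. -/

import Mathlib

open FreeGroup Filter

namespace PurelyLox

abbrev F : Type := FreeGroup (Fin 3)

def a : F := FreeGroup.of 0
def b : F := FreeGroup.of 1
def c : F := FreeGroup.of 2

/-- The subgroup generated by `a` and `b`. -/
def H : Subgroup F := Subgroup.closure {a, b}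

/-- `g` is a positive word in the generators `a` and `b`. -/
def PosAB (g : F) : Prop :=
  ∀ x ∈ g.toWord, x.2 = true ∧ x.1 ≠ 2

/-- A word is 7-aperiodic: it contains no subword `u^7` with `u` nonempty. -/
def Aperiodic7 {β : Type*} (w : List β) : Prop :=
  ¬ ∃ u : List β, u ≠ [] ∧ (List.flatten (List.replicate 7 u)) <:+: w

/-- The data of the fixed sequence `(v n)` of positive 7-aperiodic words in `a,b`,
with pairwise distinct lengths tending to infinity. -/
structure VSeq where
  v : ℕ → F
  pos : ∀ n, PosAB (v n)
  len_ne : ∀ m n, m ≠ n → ((v m).toWord.length ≠ (v n).toWord.length)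
  len_tendsto : Tendsto (fun n => (v n).toWord.length) atTop atTop
  aperiodic : ∀ n, Aperiodic7 (v n).toWord

/-- `w n = v n * c`. -/
def VSeq.w (V : VSeq) (n : ℕ) : F := V.v n * c

/-- `z` is a `W`-word: nontrivial, and its reduced word is a subword of
the reduced word of `(w n)^m` for some `n` and some `m ≠ 0`. -/
def VSeq.IsW (V : VSeq) (z : F) : Prop :=
  z ≠ 1 ∧ ∃ (n : ℕ) (m : ℤ), m ≠ 0 ∧ z.toWord <:+: ((V.w n) ^ m).toWord

/-- `|g|_Y`: the least `k` such that `g` is a product of `k` `W`-words. -/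
noncomputable def VSeq.normY (V : VSeq) (g : F) : ℕ :=
  sInf {k | ∃ l : List F, l.length = k ∧ (∀ z ∈ l, V.IsW z) ∧ l.prod = g}

/-- The vertex distance in the graph `Y`. -/
noncomputable def VSeq.dY (V : VSeq) (x y : F) : ℕ := V.normY (x⁻¹ * y)

/-- The product `u * v` is without cancellation. -/
def NoCancel (u v : F) : Prop := (u * v).toWord = u.toWord ++ v.toWord

/-- `p 0, p 1, …, p k` is a `d_Y`-geodesic from `x` to `y`. -/
def VSeq.IsGeodesic (V : VSeq) (x y : F) (k : ℕ) (p : ℕ → F) : Prop :=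
  p 0 = x ∧ p k = y ∧ (∀ i < k, V.dY (p i) (p (i + 1)) = 1) ∧ k = V.dY x y

/-- `g` is cyclically reduced. -/
def CyclicallyReduced (g : F) : Prop := (g * g).toWord = g.toWord ++ g.toWord

/-- `g` is root-free. -/
def RootFree (g : F) : Prop := ∀ (x : F) (s : ℤ), 2 ≤ |s| → g ≠ x ^ s


-- ===== auxiliary development =====
abbrev Ltr := Fin 3 × Bool

/-- no cancellation between consecutive letters -/
def NR (p q : Ltr) : Prop := ¬(p.1 = q.1 ∧ p.2 = !q.2)

def IsRed (w : List Ltr) : Prop := List.Chain' NR w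

lemma isRed_nil : IsRed [] := List.isChain_nil

lemma isRed_singleton (x : Ltr) : IsRed [x] := List.isChain_singleton x

lemma IsRed.infix {w w' : List Ltr} (h : IsRed w) (h' : w' <:+: w) : IsRed w' :=
  List.IsChain.infix h h'

lemma reduce_eq_self : ∀ {w : List Ltr}, IsRed w → FreeGroup.reduce w = w
  | [], _ => rfl
  | [_], _ => rfl
  | x :: hd :: tl, h => by
    have h1 : NR x hd := (List.isChain_cons_cons.mp h).1
    have h2 := reduce_eq_self (w := hd :: tl) (List.IsChain.tail h)
    rw [FreeGroup.reduce.cons, h2]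
    simp only [NR] at h1
    simp [h1]

lemma isRed_reduce (w : List Ltr) : IsRed (FreeGroup.reduce w) := by
  induction w with
  | nil => exact isRed_nil
  | cons x L ih =>
    rw [FreeGroup.reduce.cons]
    cases h : FreeGroup.reduce L with
    | nil => exact isRed_singleton x
    | cons hd tl =>
      rw [h] at ih
      show IsRed (if x.1 = hd.1 ∧ x.2 = !hd.2 then tl else x :: hd :: tl)
      by_cases hc : x.1 = hd.1 ∧ x.2 = !hd.2
      · rw [if_pos hc]
        exact List.IsChain.tail ih
      · rw [if_neg hc]
        exact List.isChain_cons_cons.mpr ⟨hc, ih⟩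

lemma isRed_toWord (g : F) : IsRed g.toWord := by
  rw [← FreeGroup.reduce_toWord g]
  exact isRed_reduce _

lemma toWord_mk_eq {w : List Ltr} (h : IsRed w) : (FreeGroup.mk w).toWord = w := by
  rw [FreeGroup.toWord_mk, reduce_eq_self h]

lemma toWord_mul_eq {w1 w2 : List Ltr} (h : IsRed (w1 ++ w2)) :
    (FreeGroup.mk w1 * FreeGroup.mk w2).toWord = w1 ++ w2 := by
  rw [FreeGroup.mul_mk, toWord_mk_eq h]

lemma isRed_append {w1 w2 : List Ltr} (h1 : IsRed w1) (h2 : IsRed w2)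
    (hj : ∀ p ∈ w1.getLast?, ∀ q ∈ w2.head?, NR p q) : IsRed (w1 ++ w2) :=
  List.isChain_append.mpr ⟨h1, h2, hj⟩

lemma invRev_infix {w w' : List Ltr} (h : w' <:+: w) :
    FreeGroup.invRev w' <:+: FreeGroup.invRev w := by
  unfold FreeGroup.invRev
  rw [List.reverse_infix]
  exact List.IsInfix.map _ h

lemma isRed_invRev {w : List Ltr} (h : IsRed w) : IsRed (FreeGroup.invRev w) := by
  unfold IsRed List.Chain' FreeGroup.invRev
  rw [List.isChain_reverse, List.isChain_map]
  refine List.IsChain.imp ?_ h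
  intro p q hpq hcon
  apply hpq
  simp only [Bool.not_not] at hcon
  exact ⟨hcon.1.symm, hcon.2.symm⟩

lemma getLast?_invRev (w : List Ltr) :
    (FreeGroup.invRev w).getLast? = w.head?.map (fun p => (p.1, !p.2)) := by
  unfold FreeGroup.invRev
  rw [List.getLast?_reverse, List.head?_map]

lemma exists_cancel_aux : ∀ (N : ℕ) (x y : F), x.toWord.length ≤ N →
    ∃ al be : List Ltr, al <+: x.toWord ∧ be <:+ y.toWord ∧ (x * y).toWord = al ++ be := by
  intro N
  induction N with
  | zero =>
    intro x y h
    have hx : x = 1 := by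
      rw [← FreeGroup.toWord_eq_nil_iff]
      exact List.eq_nil_of_length_eq_zero (Nat.le_zero.mp h)
    subst hx
    exact ⟨[], y.toWord, List.nil_prefix, List.suffix_refl _, by simp⟩
  | succ N ih =>
    intro x y h
    rcases List.eq_nil_or_concat x.toWord with hx | ⟨w1, l, hx⟩
    · have hx1 : x = 1 := FreeGroup.toWord_eq_nil_iff.mp hx
      subst hx1
      exact ⟨[], y.toWord, List.nil_prefix, List.suffix_refl _, by simp⟩
    · rw [List.concat_eq_append] at hx
      by_cases hy0 : y.toWord = []
      · have hy1 : y = 1 := FreeGroup.toWord_eq_nil_iff.mp hy0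
        subst hy1
        exact ⟨x.toWord, [], List.prefix_refl _, List.nil_suffix, by simp⟩
      · obtain ⟨l', w2', hy⟩ := List.exists_cons_of_ne_nil hy0
        have hw1pre : w1 <+: x.toWord := by rw [hx]; exact ⟨[l], rfl⟩
        have hw2suf : w2' <:+ y.toWord := by rw [hy]; exact List.suffix_cons l' w2'
        have hw1 : IsRed w1 := (isRed_toWord x).infix hw1pre.isInfix
        have hw2 : IsRed w2' := (isRed_toWord y).infix hw2suf.isInfix
        by_cases hc : l.1 = l'.1 ∧ l.2 = !l'.2
        · -- cancellation at the junction
          have hl' : l' = (l.1, !l.2) := by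
            obtain ⟨h1, h2⟩ := hc
            cases l' with
            | mk i b =>
              cases l with
              | mk j d => simp_all
          have hxeq : x = FreeGroup.mk w1 * FreeGroup.mk [l] := by
            rw [FreeGroup.mul_mk, ← hx, FreeGroup.mk_toWord]
          have hyeq : y = FreeGroup.mk [l'] * FreeGroup.mk w2' := by
            rw [FreeGroup.mul_mk]
            have h5 : ([l'] ++ w2') = y.toWord := by rw [hy]; rfl
            rw [h5, FreeGroup.mk_toWord]
          have hll' : FreeGroup.mk [l] * FreeGroup.mk [l'] = 1 := by
            subst hl'
            rw [FreeGroup.mul_mk, FreeGroup.one_eq_mk]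
            exact Quot.sound (by simpa using @FreeGroup.Red.Step.not (Fin 3) [] [] l.1 l.2)
          have hmul : x * y = FreeGroup.mk w1 * FreeGroup.mk w2' := by
            rw [hxeq, hyeq, mul_assoc, ← mul_assoc (FreeGroup.mk [l]), hll', one_mul]
          have hlen : (FreeGroup.mk w1).toWord.length ≤ N := by
            rw [toWord_mk_eq hw1]
            have : x.toWord.length = w1.length + 1 := by rw [hx]; simp
            omega
          obtain ⟨al, be, hp, hs, heq⟩ := ih (FreeGroup.mk w1) (FreeGroup.mk w2') hlen
          rw [toWord_mk_eq hw1] at hp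
          rw [toWord_mk_eq hw2] at hs
          exact ⟨al, be, hp.trans hw1pre, hs.trans hw2suf, by rw [hmul]; exact heq⟩
        · -- no cancellation
          have hred : IsRed (x.toWord ++ y.toWord) := by
            refine isRed_append (isRed_toWord x) (isRed_toWord y) ?_
            intro p hp q hq
            rw [hx, List.getLast?_concat] at hp
            rw [hy] at hq
            simp only [List.head?_cons, Option.mem_def, Option.some.injEq] at hp hq
            subst hp; subst hq
            exact hc
          refine ⟨x.toWord, y.toWord, List.prefix_refl _, List.suffix_refl _, ?_⟩
          conv_lhs => rw [← FreeGroup.mk_toWord (x := x), ← FreeGroup.mk_toWord (x := y)]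
          exact toWord_mul_eq hred

lemma exists_cancel (x y : F) :
    ∃ al be : List Ltr, al <+: x.toWord ∧ be <:+ y.toWord ∧ (x * y).toWord = al ++ be :=
  exists_cancel_aux x.toWord.length x y le_rfl

lemma mk_flatten : ∀ L : List (List Ltr), FreeGroup.mk L.flatten = (L.map FreeGroup.mk).prod
  | [] => by rw [List.flatten_nil, List.map_nil, List.prod_nil, FreeGroup.one_eq_mk]
  | c :: L => by
    rw [List.flatten_cons, ← FreeGroup.mul_mk, List.map_cons, List.prod_cons, mk_flatten L]

lemma flatten_prefix_decomp : ∀ (L : List (List Ltr)) (A : List Ltr), A <+: L.flatten →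
    ∃ L1 : List (List Ltr), L1.flatten = A ∧ L1.length ≤ L.length ∧
      ∀ ch ∈ L1, ∃ ch' ∈ L, ch <:+: ch'
  | [], A, h => by
    rw [List.flatten_nil] at h
    exact ⟨[], by simpa using (List.prefix_nil.mp h).symm, le_rfl, by simp⟩
  | c :: L', A, h => by
    rw [List.flatten_cons] at h
    obtain ⟨B, hB⟩ := h
    by_cases hlen : A.length ≤ c.length
    · have hA : A <+: c := by
        have h2 : A = (c ++ L'.flatten).take A.length := by
          rw [← hB, List.take_append_of_le_length (by simp), List.take_length]
        rw [List.take_append_of_le_length hlen] at h2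
        rw [h2]
        exact List.take_prefix _ _
      refine ⟨[A], by simp, by simp, ?_⟩
      intro ch hch
      have hcheq : ch = A := by simpa using hch
      subst hcheq
      exact ⟨c, List.mem_cons_self, hA.isInfix⟩
    · have hc : c <+: A := by
        have h2 : c = (A ++ B).take c.length := by
          rw [hB, List.take_append_of_le_length le_rfl, List.take_length]
        rw [List.take_append_of_le_length (le_of_not_ge hlen)] at h2
        rw [h2]
        exact List.take_prefix _ _
      obtain ⟨A', rfl⟩ := hc
      rw [List.append_assoc] at hB
      have hA' : A' <+: L'.flatten := ⟨B, List.append_cancel_left hB⟩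
      obtain ⟨L1, h1, h2, h3⟩ := flatten_prefix_decomp L' A' hA'
      refine ⟨c :: L1, by rw [List.flatten_cons, h1], by simpa using h2, ?_⟩
      intro ch hch
      rcases List.mem_cons.mp hch with hcheq | hch'
      · subst hcheq
        exact ⟨ch, List.mem_cons_self, List.infix_refl _⟩
      · obtain ⟨ch', hm, hi⟩ := h3 ch hch'
        exact ⟨ch', List.mem_cons_of_mem _ hm, hi⟩

lemma flatten_split_decomp : ∀ (L : List (List Ltr)) (A B : List Ltr), L.flatten = A ++ B →
    ∃ L1 L2 : List (List Ltr), L1.flatten = A ∧ L2.flatten = B ∧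
      L1.length + L2.length ≤ L.length + 1 ∧
      (∀ ch ∈ L1, ∃ ch' ∈ L, ch <:+: ch') ∧ (∀ ch ∈ L2, ∃ ch' ∈ L, ch <:+: ch')
  | [], A, B, h => by
    rw [List.flatten_nil] at h
    obtain ⟨rfl, rfl⟩ := List.append_eq_nil_iff.mp h.symm
    exact ⟨[], [], rfl, rfl, by simp, by simp, by simp⟩
  | c :: L', A, B, h => by
    rw [List.flatten_cons] at h
    by_cases hlen : A.length ≤ c.length
    · have hA : A <+: c := by
        have h2 : A = (c ++ L'.flatten).take A.length := by
          rw [h, List.take_append_of_le_length (by simp), List.take_length]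
        rw [List.take_append_of_le_length hlen] at h2
        rw [h2]; exact List.take_prefix _ _
      obtain ⟨c2, rfl⟩ := hA
      rw [List.append_assoc] at h
      have hB : B = c2 ++ L'.flatten := (List.append_cancel_left h).symm
      refine ⟨[A], c2 :: L', by simp, by rw [List.flatten_cons, hB], by simp; omega, ?_, ?_⟩
      · intro ch hch
        have hcheq : ch = A := by simpa using hch
        subst hcheq
        exact ⟨ch ++ c2, List.mem_cons_self, ⟨[], c2, by simp⟩⟩
      · intro ch hch
        rcases List.mem_cons.mp hch with hcheq | hh
        · subst hcheq
          exact ⟨A ++ ch, List.mem_cons_self, ⟨A, [], by simp⟩⟩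
        · exact ⟨ch, List.mem_cons_of_mem _ hh, List.infix_refl _⟩
    · have hc : c <+: A := by
        have h2 : c = (A ++ B).take c.length := by
          rw [← h, List.take_append_of_le_length le_rfl, List.take_length]
        rw [List.take_append_of_le_length (le_of_not_ge hlen)] at h2
        rw [h2]; exact List.take_prefix _ _
      obtain ⟨A', rfl⟩ := hc
      rw [List.append_assoc] at h
      have h' : L'.flatten = A' ++ B := List.append_cancel_left h
      obtain ⟨L1, L2, h1, h2, h3, h4, h5⟩ := flatten_split_decomp L' A' B h'
      refine ⟨c :: L1, L2, by rw [List.flatten_cons, h1], h2, by simp; omega, ?_, ?_⟩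
      · intro ch hch
        rcases List.mem_cons.mp hch with hcheq | hh
        · subst hcheq
          exact ⟨ch, List.mem_cons_self, List.infix_refl _⟩
        · obtain ⟨ch', hm, hi⟩ := h4 ch hh
          exact ⟨ch', List.mem_cons_of_mem _ hm, hi⟩
      · intro ch hch
        obtain ⟨ch', hm, hi⟩ := h5 ch hch
        exact ⟨ch', List.mem_cons_of_mem _ hm, hi⟩

lemma singleton_infix_of_mem {x : Ltr} {l : List Ltr} (h : x ∈ l) : [x] <:+: l := by
  obtain ⟨s, t, rfl⟩ := List.append_of_mem h
  exact ⟨s, t, by simp⟩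

lemma flatten_replicate_singleton (n : ℕ) (x : Ltr) :
    (List.replicate n [x]).flatten = List.replicate n x := by
  induction n with
  | zero => simp
  | succ k ih => simp [List.replicate_succ, ih]

lemma replicate_infix {n m : ℕ} (h : n ≤ m) (x : Ltr) :
    List.replicate n x <:+: List.replicate m x := by
  refine ⟨[], List.replicate (m - n) x, ?_⟩
  rw [List.nil_append, ← List.replicate_add]
  congr 1
  omega

/-- a key consequence of the `VSeq` axioms: there is `N` such that the reduced word of
`w N` is `v N ++ [c]` and contains all three positive letters. -/
lemma key_letters (V : VSeq) : ∃ N : ℕ,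
    (V.w N).toWord = (V.v N).toWord ++ [((2 : Fin 3), true)] ∧
      ∀ i : Fin 3, (i, true) ∈ (V.w N).toWord := by
  obtain ⟨N, hN⟩ := (V.len_tendsto.eventually_ge_atTop 7).exists
  have hpos := V.pos N
  have hletter : ∀ i : Fin 3, i ≠ 2 → ((∀ q ∈ (V.v N).toWord, q = (i, true)) → False) := by
    intro i _ hall
    apply V.aperiodic N
    refine ⟨[(i, true)], by simp, ?_⟩
    rw [flatten_replicate_singleton]
    rw [List.eq_replicate_of_mem hall]
    exact replicate_infix (by omega) _
  have h0 : ((0 : Fin 3), true) ∈ (V.v N).toWord := by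
    by_contra h0
    refine hletter 1 (by decide) ?_
    intro q hq
    obtain ⟨ht, hne⟩ := hpos q hq
    have hq0 : q.1 ≠ 0 := by
      intro hh
      apply h0
      have : q = ((0 : Fin 3), true) := Prod.ext hh ht
      rwa [this] at hq
    have : q.1 = 1 := by omega
    exact Prod.ext this ht
  have h1 : ((1 : Fin 3), true) ∈ (V.v N).toWord := by
    by_contra h1
    refine hletter 0 (by decide) ?_
    intro q hq
    obtain ⟨ht, hne⟩ := hpos q hq
    have hq1 : q.1 ≠ 1 := by
      intro hh
      apply h1
      have : q = ((1 : Fin 3), true) := Prod.ext hh ht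
      rwa [this] at hq
    have : q.1 = 0 := by omega
    exact Prod.ext this ht
  have hw : (V.w N).toWord = (V.v N).toWord ++ [((2 : Fin 3), true)] := by
    have hred : IsRed ((V.v N).toWord ++ [((2 : Fin 3), true)]) := by
      refine isRed_append (isRed_toWord _) (isRed_singleton _) ?_
      intro p hp q hq
      simp only [List.head?_cons, Option.mem_def, Option.some.injEq] at hq
      subst hq
      have hpmem : p ∈ (V.v N).toWord := List.mem_of_getLast? hp
      obtain ⟨ht, _⟩ := hpos p hpmem
      show ¬(p.1 = (2 : Fin 3) ∧ p.2 = !true)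
      rw [ht]
      simp
    have : V.w N = FreeGroup.mk (V.v N).toWord * FreeGroup.mk [((2 : Fin 3), true)] := by
      show V.v N * c = _
      rw [FreeGroup.mk_toWord]
      have hc2 : FreeGroup.mk [((2 : Fin 3), true)] = c := by
        have h9 : ((FreeGroup.of (2 : Fin 3) : F)).toWord = [((2 : Fin 3), true)] :=
          FreeGroup.toWord_of 2
        rw [← h9, FreeGroup.mk_toWord]
        rfl
      rw [hc2]
    rw [this, toWord_mul_eq hred]
  refine ⟨N, hw, ?_⟩
  intro i
  rw [hw]
  by_cases hi : i = 2
  · subst hi; simp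
  · apply List.mem_append_left
    have : i = 0 ∨ i = 1 := by omega
    rcases this with rfl | rfl
    · exact h0
    · exact h1

def WChunk (V : VSeq) (ch : List Ltr) : Prop :=
  ∃ (n : ℕ) (m : ℤ), m ≠ 0 ∧ ch <:+: ((V.w n) ^ m).toWord

lemma WChunk.infix {V : VSeq} {ch ch' : List Ltr} (h : ch <:+: ch') (h' : WChunk V ch') :
    WChunk V ch := by
  obtain ⟨n, m, hm, hi⟩ := h'
  exact ⟨n, m, hm, h.trans hi⟩

lemma WChunk.isW {V : VSeq} {ch : List Ltr} (h : WChunk V ch) (hne : ch ≠ []) :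
    V.IsW (FreeGroup.mk ch) := by
  obtain ⟨n, m, hm, hi⟩ := h
  have hred : IsRed ch := (isRed_toWord _).infix hi
  have htw : (FreeGroup.mk ch).toWord = ch := toWord_mk_eq hred
  refine ⟨?_, n, m, hm, by rw [htw]; exact hi⟩
  intro hone
  apply hne
  rw [← htw, hone, FreeGroup.toWord_one]

lemma isW_wchunk {V : VSeq} {z : F} (h : V.IsW z) : WChunk V z.toWord := h.2

lemma wchunk_singleton (V : VSeq) (x : Ltr) : WChunk V [x] := by
  obtain ⟨N, _, hmem⟩ := key_letters V
  obtain ⟨i, bb⟩ := x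
  cases bb
  · refine ⟨N, -1, by norm_num, ?_⟩
    rw [zpow_neg_one, FreeGroup.toWord_inv]
    apply singleton_infix_of_mem
    unfold FreeGroup.invRev
    rw [List.mem_reverse, List.mem_map]
    exact ⟨(i, true), hmem i, rfl⟩
  · refine ⟨N, 1, one_ne_zero, ?_⟩
    rw [zpow_one]
    exact singleton_infix_of_mem (hmem i)

lemma isW_inv {V : VSeq} {z : F} (h : V.IsW z) : V.IsW z⁻¹ := by
  obtain ⟨hne, n, m, hm, hi⟩ := h
  refine ⟨inv_ne_one.mpr hne, n, -m, neg_ne_zero.mpr hm, ?_⟩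
  have h2 := invRev_infix hi
  rw [FreeGroup.toWord_inv, zpow_neg, FreeGroup.toWord_inv]
  exact h2

lemma normY_nonempty (V : VSeq) (g : F) :
    {k | ∃ l : List F, l.length = k ∧ (∀ z ∈ l, V.IsW z) ∧ l.prod = g}.Nonempty := by
  refine ⟨(g.toWord.map (fun x => FreeGroup.mk [x])).length,
    g.toWord.map (fun x => FreeGroup.mk [x]), rfl, ?_, ?_⟩
  · intro z hz
    rw [List.mem_map] at hz
    obtain ⟨x, _, rfl⟩ := hz
    exact (wchunk_singleton V x).isW (by simp)
  · have h1 : g.toWord.map (fun x => FreeGroup.mk [x]) =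
        (g.toWord.map (fun x => [x])).map FreeGroup.mk := by rw [List.map_map]; rfl
    rw [h1, ← mk_flatten]
    have h2 : (g.toWord.map (fun x => [x])).flatten = g.toWord := by
      induction g.toWord with
      | nil => simp
      | cons p l ih => simp [ih]
    rw [h2, FreeGroup.mk_toWord]

lemma normY_spec (V : VSeq) (g : F) : ∃ l : List F,
    l.length = V.normY g ∧ (∀ z ∈ l, V.IsW z) ∧ l.prod = g :=
  Nat.sInf_mem (normY_nonempty V g)

lemma normY_le (V : VSeq) {g : F} {l : List F} (h1 : ∀ z ∈ l, V.IsW z) (h2 : l.prod = g) :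
    V.normY g ≤ l.length :=
  Nat.sInf_le ⟨l, rfl, h1, h2⟩

lemma normY_one (V : VSeq) : V.normY 1 = 0 :=
  Nat.le_zero.mp (normY_le V (l := []) (by simp) (by simp))

lemma normY_mul_le (V : VSeq) (u v : F) : V.normY (u * v) ≤ V.normY u + V.normY v := by
  obtain ⟨lu, hul, huW, hup⟩ := normY_spec V u
  obtain ⟨lv, hvl, hvW, hvp⟩ := normY_spec V v
  have := normY_le V (g := u * v) (l := lu ++ lv) ?_ ?_
  · rwa [List.length_append, hul, hvl] at this
  · intro z hz
    rcases List.mem_append.mp hz with h | h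
    · exact huW z h
    · exact hvW z h
  · rw [List.prod_append, hup, hvp]

lemma normY_inv_le (V : VSeq) (u : F) : V.normY u⁻¹ ≤ V.normY u := by
  obtain ⟨lu, hul, huW, hup⟩ := normY_spec V u
  have := normY_le V (g := u⁻¹) (l := (lu.map (fun x => x⁻¹)).reverse) ?_ ?_
  · simpa [hul] using this
  · intro z hz
    rw [List.mem_reverse, List.mem_map] at hz
    obtain ⟨w, hw, rfl⟩ := hz
    exact isW_inv (huW w hw)
  · rw [← List.prod_inv_reverse, hup]

lemma normY_inv (V : VSeq) (u : F) : V.normY u⁻¹ = V.normY u := by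
  refine le_antisymm (normY_inv_le V u) ?_
  have := normY_inv_le V u⁻¹
  rwa [inv_inv] at this

/-- Chunk decomposition: the reduced word of a product of `k` W-words is the concatenation
of at most `k` chunks, each of which is a subword of a power of some `w n`. -/
lemma normY_chunks (V : VSeq) (l : List F) (h : ∀ z ∈ l, V.IsW z) :
    ∃ L : List (List Ltr), L.flatten = l.prod.toWord ∧ L.length ≤ l.length ∧
      ∀ ch ∈ L, WChunk V ch := by
  induction l using List.reverseRecOn with
  | nil => exact ⟨[], by simp, by simp, by simp⟩
  | append_singleton l' z ih =>
    obtain ⟨L', hf, hl, hc⟩ := ih (fun w hw => h w (List.mem_append_left _ hw))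
    obtain ⟨al, be, hp, hs, heq⟩ := exists_cancel l'.prod z
    rw [← hf] at hp
    obtain ⟨L1, f1, len1, inf1⟩ := flatten_prefix_decomp L' al hp
    refine ⟨L1 ++ [be], ?_, ?_, ?_⟩
    · rw [List.flatten_append, f1, List.prod_append, List.prod_singleton, heq]
      simp
    · simp only [List.length_append, List.length_singleton]
      omega
    · intro ch hch
      rcases List.mem_append.mp hch with hh | hh
      · obtain ⟨ch', hm, hi⟩ := inf1 ch hh
        exact WChunk.infix hi (hc ch' hm)
      · have : ch = be := by simpa using hh
        subst this
        exact WChunk.infix hs.isInfix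
          (isW_wchunk (h z (List.mem_append_right _ (List.mem_singleton_self _))))

lemma normY_flatten_le (V : VSeq) (M : List (List Ltr)) (hM : ∀ ch ∈ M, WChunk V ch) :
    V.normY (FreeGroup.mk M.flatten) ≤ M.length := by
  induction M with
  | nil =>
    rw [List.flatten_nil, ← FreeGroup.one_eq_mk, normY_one]
    simp
  | cons cc M' ihM =>
    rw [List.flatten_cons, ← FreeGroup.mul_mk]
    calc V.normY (FreeGroup.mk cc * FreeGroup.mk M'.flatten)
        ≤ V.normY (FreeGroup.mk cc) + V.normY (FreeGroup.mk M'.flatten) := normY_mul_le V _ _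
      _ ≤ 1 + M'.length := by
          refine add_le_add ?_ (ihM (fun ch hch => hM ch (List.mem_cons_of_mem _ hch)))
          by_cases hcc : cc = []
          · subst hcc
            rw [← FreeGroup.one_eq_mk, normY_one]
            omega
          · exact normY_le V (l := [FreeGroup.mk cc])
              (by simpa using (hM cc (List.mem_cons_self)).isW hcc) (by simp)
      _ = (cc :: M').length := by simp [Nat.add_comm]

/-- Near-additivity of `normY` along concatenations without cancellation.
This is the key consequence of the fact that the generating set is closed under subwords. -/
lemma normY_superadd (V : VSeq) (u v : F) (h : (u * v).toWord = u.toWord ++ v.toWord) :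
    V.normY u + V.normY v ≤ V.normY (u * v) + 1 := by
  obtain ⟨l, hlen, hW, hprod⟩ := normY_spec V (u * v)
  obtain ⟨L, hf, hL, hC⟩ := normY_chunks V l hW
  rw [hprod, h] at hf
  obtain ⟨L1, L2, f1, f2, hlen2, inf1, inf2⟩ := flatten_split_decomp L _ _ hf
  have hu : V.normY u ≤ L1.length := by
    have := normY_flatten_le V L1 (fun ch hch => by
      obtain ⟨ch', hm, hi⟩ := inf1 ch hch
      exact WChunk.infix hi (hC ch' hm))
    rwa [f1, FreeGroup.mk_toWord] at this
  have hv : V.normY v ≤ L2.length := by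
    have := normY_flatten_le V L2 (fun ch hch => by
      obtain ⟨ch', hm, hi⟩ := inf2 ch hch
      exact WChunk.infix hi (hC ch' hm))
    rwa [f2, FreeGroup.mk_toWord] at this
  omega

def cp : List Ltr → List Ltr → List Ltr
  | [], _ => []
  | _ :: _, [] => []
  | p :: l1, q :: l2 => if p = q then p :: cp l1 l2 else []

lemma cp_prefix_left : ∀ w1 w2 : List Ltr, cp w1 w2 <+: w1
  | [], _ => List.nil_prefix
  | _ :: _, [] => List.nil_prefix
  | p :: l1, q :: l2 => by
    show (if p = q then p :: cp l1 l2 else []) <+: p :: l1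
    by_cases h : p = q
    · rw [if_pos h]
      obtain ⟨t, ht⟩ := cp_prefix_left l1 l2
      exact ⟨t, by rw [List.cons_append, ht]⟩
    · rw [if_neg h]
      exact List.nil_prefix

lemma cp_prefix_right : ∀ w1 w2 : List Ltr, cp w1 w2 <+: w2
  | [], _ => List.nil_prefix
  | _ :: _, [] => List.nil_prefix
  | p :: l1, q :: l2 => by
    show (if p = q then p :: cp l1 l2 else []) <+: q :: l2
    by_cases h : p = q
    · rw [if_pos h, h]
      obtain ⟨t, ht⟩ := cp_prefix_right l1 l2
      exact ⟨t, by rw [List.cons_append, ht]⟩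
    · rw [if_neg h]
      exact List.nil_prefix

lemma cp_head_ne : ∀ (w1 w2 : List Ltr) (p q : Ltr),
    (w1.drop (cp w1 w2).length).head? = some p →
    (w2.drop (cp w1 w2).length).head? = some q → p ≠ q
  | [], w2, p, q, h1, h2 => by simp [cp] at h1
  | x :: l1, [], p, q, h1, h2 => by
    have : cp (x :: l1) ([] : List Ltr) = [] := rfl
    rw [this] at h2
    simp at h2
  | x :: l1, y :: l2, p, q, h1, h2 => by
    by_cases h : x = y
    · have hcp : cp (x :: l1) (y :: l2) = x :: cp l1 l2 := by
        show (if x = y then x :: cp l1 l2 else []) = _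
        rw [if_pos h]
      rw [hcp] at h1 h2
      simp only [List.length_cons, List.drop_succ_cons] at h1 h2
      exact cp_head_ne l1 l2 p q h1 h2
    · have hcp : cp (x :: l1) (y :: l2) = [] := by
        show (if x = y then x :: cp l1 l2 else []) = _
        rw [if_neg h]
      rw [hcp] at h1 h2
      simp only [List.length_nil, List.drop_zero, List.head?_cons,
        Option.some.injEq] at h1 h2
      subst h1; subst h2
      exact h

lemma cp_self : ∀ w : List Ltr, cp w w = w
  | [] => rfl
  | p :: l => by
    show (if p = p then p :: cp l l else []) = p :: l
    rw [if_pos rfl, cp_self l]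

lemma cp_nil_left (w : List Ltr) : cp [] w = [] := rfl

lemma normY_infix_split (V : VSeq) {w1 w2 : List Ltr} (h : IsRed (w1 ++ w2)) :
    V.normY (FreeGroup.mk w1) + V.normY (FreeGroup.mk w2) ≤
      V.normY (FreeGroup.mk (w1 ++ w2)) + 1 := by
  have h1 : IsRed w1 := h.infix ⟨[], w2, by simp⟩
  have h2 : IsRed w2 := h.infix ⟨w1, [], by simp⟩
  have h3 := normY_superadd V (FreeGroup.mk w1) (FreeGroup.mk w2)
    (by rw [toWord_mul_eq h, toWord_mk_eq h1, toWord_mk_eq h2])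
  rwa [FreeGroup.mul_mk] at h3

/-- The splitting of `g` along its common prefix with `s`, with the key estimate. -/
lemma cp_split (V : VSeq) (g s : F) :
    FreeGroup.mk (cp g.toWord s.toWord) *
        FreeGroup.mk (g.toWord.drop (cp g.toWord s.toWord).length) = g ∧
    V.normY s + 2 * V.normY (FreeGroup.mk (g.toWord.drop (cp g.toWord s.toWord).length)) ≤
      V.normY g + V.normY (g⁻¹ * s) + 2 := by
  set π := cp g.toWord s.toWord with hπ
  set t1 := g.toWord.drop π.length with ht1
  set t2 := s.toWord.drop π.length with ht2
  have hpre1 : π <+: g.toWord := cp_prefix_left _ _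
  have hpre2 : π <+: s.toWord := cp_prefix_right _ _
  have hw1eq : π ++ t1 = g.toWord := by
    conv_lhs => rw [List.prefix_iff_eq_take.mp hpre1]
    exact List.take_append_drop _ _
  have hw2eq : π ++ t2 = s.toWord := by
    conv_lhs => rw [List.prefix_iff_eq_take.mp hpre2]
    exact List.take_append_drop _ _
  have hred1 : IsRed (π ++ t1) := by rw [hw1eq]; exact isRed_toWord g
  have hred2 : IsRed (π ++ t2) := by rw [hw2eq]; exact isRed_toWord s
  have hredπ : IsRed π := hred1.infix ⟨[], t1, by simp⟩
  have hredt1 : IsRed t1 := hred1.infix ⟨π, [], by simp⟩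
  have hredt2 : IsRed t2 := hred2.infix ⟨π, [], by simp⟩
  have hmk1 : FreeGroup.mk π * FreeGroup.mk t1 = g := by
    rw [FreeGroup.mul_mk, hw1eq, FreeGroup.mk_toWord]
  have hmk2 : FreeGroup.mk π * FreeGroup.mk t2 = s := by
    rw [FreeGroup.mul_mk, hw2eq, FreeGroup.mk_toWord]
  refine ⟨hmk1, ?_⟩
  -- estimate A
  have hA : V.normY (FreeGroup.mk π) + V.normY (FreeGroup.mk t1) ≤ V.normY g + 1 := by
    have := normY_infix_split V hred1
    rwa [hw1eq, FreeGroup.mk_toWord] at this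
  -- estimate B
  have hjred : IsRed (FreeGroup.invRev t1 ++ t2) := by
    refine isRed_append (isRed_invRev hredt1) hredt2 ?_
    intro pl hpl q hq
    rw [getLast?_invRev] at hpl
    simp only [Option.mem_def, Option.map_eq_some_iff] at hpl
    obtain ⟨p0, hp0, rfl⟩ := hpl
    have hne : p0 ≠ q := cp_head_ne g.toWord s.toWord p0 q hp0 hq
    intro ⟨e1, e2⟩
    apply hne
    refine Prod.ext e1 ?_
    simpa using e2
  have hinvmul : (FreeGroup.mk t1)⁻¹ * FreeGroup.mk t2 = g⁻¹ * s := by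
    rw [← hmk1, ← hmk2]
    group
  have hB : V.normY (FreeGroup.mk t1) + V.normY (FreeGroup.mk t2) ≤
      V.normY (g⁻¹ * s) + 1 := by
    have hsup := normY_superadd V ((FreeGroup.mk t1)⁻¹) (FreeGroup.mk t2) ?_
    · rw [hinvmul, normY_inv] at hsup
      exact hsup
    · rw [FreeGroup.inv_mk, toWord_mul_eq hjred, toWord_mk_eq (isRed_invRev hredt1),
        toWord_mk_eq hredt2]
  -- estimate C
  have hC : V.normY s ≤ V.normY (FreeGroup.mk π) + V.normY (FreeGroup.mk t2) := by
    rw [← hmk2]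
    exact normY_mul_le V _ _
  omega

/-- Geodesics of `H` (in its Cayley graph w.r.t. `{a,b}`) between points of `H`
are uniformly Hausdorff close, in `d_Y`, to `d_Y`-geodesics with the same endpoints. -/
theorem stmt5 (V : VSeq) :
    ∃ C' : ℝ, 1 ≤ C' ∧
      ∀ x y : F, x ∈ H → y ∈ H →
        ∀ (k : ℕ) (p : ℕ → F), V.IsGeodesic x y k p →
          (∀ u : List (Fin 3 × Bool), u <+: (x⁻¹ * y).toWord →
            ∃ i ≤ k, (V.dY (x * FreeGroup.mk u) (p i) : ℝ) ≤ C') ∧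
          (∀ i ≤ k, ∃ u : List (Fin 3 × Bool), u <+: (x⁻¹ * y).toWord ∧
            (V.dY (p i) (x * FreeGroup.mk u) : ℝ) ≤ C') := by
  refine ⟨6, by norm_num, ?_⟩
  intro x y _ _ k p hgeo
  obtain ⟨hp0, hpk, hstep, hk⟩ := hgeo
  have hstep' : ∀ i, i < k → V.normY ((p i)⁻¹ * p (i + 1)) = 1 := hstep
  have hk' : k = V.normY (x⁻¹ * y) := hk
  have hfor : ∀ i ≤ k, V.normY (x⁻¹ * p i) ≤ i := by
    intro i
    induction i with
    | zero =>
      intro _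
      rw [hp0, inv_mul_cancel, normY_one]
    | succ j ih =>
      intro hj
      have h1 : V.normY (x⁻¹ * p j) ≤ j := ih (by omega)
      have h3 : x⁻¹ * p (j + 1) = (x⁻¹ * p j) * ((p j)⁻¹ * p (j + 1)) := by group
      have h4 := normY_mul_le V (x⁻¹ * p j) ((p j)⁻¹ * p (j + 1))
      rw [hstep' j (by omega)] at h4
      rw [h3]
      omega
  have hback : ∀ d i, i ≤ k → k - i = d → V.normY ((p i)⁻¹ * y) ≤ d := by
    intro d
    induction d with
    | zero =>
      intro i hik h0
      have hike : i = k := by omega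
      subst hike
      rw [hpk, inv_mul_cancel, normY_one]
    | succ d ihd =>
      intro i hik hd
      have h3 : (p i)⁻¹ * y = ((p i)⁻¹ * p (i + 1)) * ((p (i + 1))⁻¹ * y) := by group
      have h4 := normY_mul_le V ((p i)⁻¹ * p (i + 1)) ((p (i + 1))⁻¹ * y)
      rw [hstep' i (by omega)] at h4
      have h5 := ihd (i + 1) (by omega) (by omega)
      rw [h3]
      omega
  have hdist : ∀ i ≤ k, V.normY (x⁻¹ * p i) = i ∧ V.normY ((p i)⁻¹ * y) = k - i := by
    intro i hik
    have h1 := hfor i hik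
    have h2 := hback (k - i) i hik rfl
    have h3 : V.normY (x⁻¹ * y) ≤ V.normY (x⁻¹ * p i) + V.normY ((p i)⁻¹ * y) := by
      have he : x⁻¹ * y = (x⁻¹ * p i) * ((p i)⁻¹ * y) := by group
      rw [he]
      exact normY_mul_le V _ _
    omega
  set s : F := x⁻¹ * y with hs
  have key : ∀ i ≤ k,
      FreeGroup.mk (cp (x⁻¹ * p i).toWord s.toWord) *
          FreeGroup.mk ((x⁻¹ * p i).toWord.drop (cp (x⁻¹ * p i).toWord s.toWord).length)
            = x⁻¹ * p i ∧
      V.normY (FreeGroup.mk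
        ((x⁻¹ * p i).toWord.drop (cp (x⁻¹ * p i).toWord s.toWord).length)) ≤ 1 := by
    intro i hik
    obtain ⟨hmk, hest⟩ := cp_split V (x⁻¹ * p i) s
    obtain ⟨hd1, hd2⟩ := hdist i hik
    refine ⟨hmk, ?_⟩
    have hinv : (x⁻¹ * p i)⁻¹ * s = (p i)⁻¹ * y := by rw [hs]; group
    rw [hd1, hinv, hd2, ← hk'] at hest
    omega
  constructor
  · -- every vertex of the H-geodesic is near the d_Y geodesic
    intro U hU
    by_cases hUfull : U.length = s.toWord.length
    · have hUeq : U = s.toWord := hU.eq_of_length hUfull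
      refine ⟨k, le_rfl, ?_⟩
      have hxy : x * FreeGroup.mk U = y := by
        rw [hUeq, FreeGroup.mk_toWord, hs]
        group
      have h6 : V.dY (x * FreeGroup.mk U) (p k) = 0 := by
        show V.normY ((x * FreeGroup.mk U)⁻¹ * p k) = 0
        rw [hxy, hpk, inv_mul_cancel, normY_one]
      rw [h6]
      norm_num
    · have hUlt : U.length < s.toWord.length := lt_of_le_of_ne hU.length_le hUfull
      set A : Finset ℕ := (Finset.range (k + 1)).filter
        (fun i => (cp (x⁻¹ * p i).toWord s.toWord).length ≤ U.length) with hA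
      have h0A : (0 : ℕ) ∈ A := by
        rw [hA, Finset.mem_filter, Finset.mem_range]
        refine ⟨by omega, ?_⟩
        rw [hp0, inv_mul_cancel, FreeGroup.toWord_one, cp_nil_left]
        simp
      have hAne : A.Nonempty := ⟨0, h0A⟩
      set i0 := A.max' hAne with hi0
      have hi0A : i0 ∈ A := A.max'_mem hAne
      rw [hA, Finset.mem_filter, Finset.mem_range] at hi0A
      obtain ⟨hi0k, hi0len⟩ := hi0A
      have hi0k' : i0 ≤ k := by omega
      have hπk : cp (x⁻¹ * p k).toWord s.toWord = s.toWord := by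
        rw [hpk, ← hs, cp_self]
      have hkA : k ∉ A := by
        rw [hA, Finset.mem_filter]
        rintro ⟨-, hlen⟩
        rw [hπk] at hlen
        omega
      have hi0ltk : i0 < k := by
        rcases lt_or_eq_of_le hi0k' with h | h
        · exact h
        · exact absurd (h ▸ A.max'_mem hAne) hkA
      have hsucclen : U.length < (cp (x⁻¹ * p (i0 + 1)).toWord s.toWord).length := by
        by_contra hcon
        have hmem : i0 + 1 ∈ A := by
          rw [hA, Finset.mem_filter, Finset.mem_range]
          exact ⟨by omega, by omega⟩
        have := A.le_max' _ hmem
        omega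
      have hπU : cp (x⁻¹ * p i0).toWord s.toWord <+: U :=
        List.prefix_of_prefix_length_le (cp_prefix_right _ _) hU hi0len
      have hUπ : U <+: cp (x⁻¹ * p (i0 + 1)).toWord s.toWord :=
        List.prefix_of_prefix_length_le hU (cp_prefix_right _ _) (by omega)
      obtain ⟨m, hm⟩ := hπU
      obtain ⟨m', hm'⟩ := hUπ
      have hredk : IsRed (cp (x⁻¹ * p (i0 + 1)).toWord s.toWord) :=
        (isRed_toWord s).infix (cp_prefix_right _ _).isInfix
      have hsplit1 : cp (x⁻¹ * p (i0 + 1)).toWord s.toWord =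
          cp (x⁻¹ * p i0).toWord s.toWord ++ (m ++ m') := by
        rw [← hm', ← hm, List.append_assoc]
      have hr2 : IsRed (cp (x⁻¹ * p i0).toWord s.toWord ++ (m ++ m')) := by
        rw [← hsplit1]; exact hredk
      have hr3 : IsRed (m ++ m') := hr2.infix ⟨cp (x⁻¹ * p i0).toWord s.toWord, [], by simp⟩
      have e1 := normY_infix_split V hr3
      have e2 : V.normY (FreeGroup.mk (cp (x⁻¹ * p i0).toWord s.toWord)) +
          V.normY (FreeGroup.mk (m ++ m')) ≤
          V.normY (FreeGroup.mk (cp (x⁻¹ * p (i0 + 1)).toWord s.toWord)) + 1 := by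
        have := normY_infix_split V hr2
        rwa [← hsplit1] at this
      obtain ⟨hmk1, ht1⟩ := key i0 (by omega)
      obtain ⟨hmk2, ht2⟩ := key (i0 + 1) (by omega)
      set T1 := FreeGroup.mk
        ((x⁻¹ * p i0).toWord.drop (cp (x⁻¹ * p i0).toWord s.toWord).length) with hT1
      set T2 := FreeGroup.mk
        ((x⁻¹ * p (i0 + 1)).toWord.drop (cp (x⁻¹ * p (i0 + 1)).toWord s.toWord).length) with hT2
      set W0 : List Ltr := cp (x⁻¹ * p i0).toWord s.toWord with hW0
      set W1 : List Ltr := cp (x⁻¹ * p (i0 + 1)).toWord s.toWord with hW1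
      have e3 : V.normY (FreeGroup.mk W1) ≤ V.normY (FreeGroup.mk W0) + 3 := by
        have hid : FreeGroup.mk W1 =
            ((FreeGroup.mk W0 * T1) * ((p i0)⁻¹ * p (i0 + 1))) * T2⁻¹ := by
          calc FreeGroup.mk W1
              = (x⁻¹ * p (i0 + 1)) * T2⁻¹ := by rw [← hmk2]; group
            _ = ((x⁻¹ * p i0) * ((p i0)⁻¹ * p (i0 + 1))) * T2⁻¹ := by group
            _ = ((FreeGroup.mk W0 * T1) * ((p i0)⁻¹ * p (i0 + 1))) * T2⁻¹ := by rw [hmk1]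
        have b1 := normY_mul_le V
          ((FreeGroup.mk W0 * T1) * ((p i0)⁻¹ * p (i0 + 1))) (T2⁻¹)
        have b2 := normY_mul_le V (FreeGroup.mk W0 * T1) ((p i0)⁻¹ * p (i0 + 1))
        have b3 := normY_mul_le V (FreeGroup.mk W0) T1
        have b4 : V.normY T2⁻¹ = V.normY T2 := normY_inv V T2
        have b5 : V.normY ((p i0)⁻¹ * p (i0 + 1)) = 1 := hstep' i0 hi0ltk
        rw [hid]
        omega
      have e4 : V.normY (FreeGroup.mk m) ≤ 5 := by omega
      refine ⟨i0, hi0k', ?_⟩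
      have hUm : FreeGroup.mk U = FreeGroup.mk W0 * FreeGroup.mk m := by
        rw [FreeGroup.mul_mk, hm]
      have hpieq : p i0 = x * (FreeGroup.mk W0 * T1) := by rw [hmk1]; group
      have hdYeq : (x * FreeGroup.mk U)⁻¹ * p i0 = (FreeGroup.mk m)⁻¹ * T1 := by
        rw [hUm, hpieq]
        group
      have hfin : V.dY (x * FreeGroup.mk U) (p i0) ≤ 6 := by
        show V.normY ((x * FreeGroup.mk U)⁻¹ * p i0) ≤ 6
        rw [hdYeq]
        have b6 := normY_mul_le V ((FreeGroup.mk m)⁻¹) T1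
        have b7 : V.normY (FreeGroup.mk m)⁻¹ = V.normY (FreeGroup.mk m) :=
          normY_inv V (FreeGroup.mk m)
        omega
      exact_mod_cast hfin
  · -- every vertex of the d_Y geodesic is near the H-geodesic
    intro i hik
    obtain ⟨hmk, ht⟩ := key i hik
    refine ⟨cp (x⁻¹ * p i).toWord s.toWord, cp_prefix_right _ _, ?_⟩
    set T := FreeGroup.mk
      ((x⁻¹ * p i).toWord.drop (cp (x⁻¹ * p i).toWord s.toWord).length) with hT
    set W : List Ltr := cp (x⁻¹ * p i).toWord s.toWord with hW
    have hpieq : p i = x * (FreeGroup.mk W * T) := by rw [hmk]; group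
    have hdYeq : (p i)⁻¹ * (x * FreeGroup.mk W) = T⁻¹ := by
      rw [hpieq]
      group
    have hfin : V.dY (p i) (x * FreeGroup.mk W) ≤ 6 := by
      show V.normY ((p i)⁻¹ * (x * FreeGroup.mk W)) ≤ 6
      rw [hdYeq, normY_inv]
      omega
    exact_mod_cast hfin

end PurelyLox
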